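/- Let n ≥ 2 and let I ⊆ R be an m-primary ideal whose Hilbert function is h_{R/I} = (1, n, 2) (i.e. h_{R/I}(0)=1, h_{R/I}(1)=n, h_{R/I}(2)=2, and h_{R/I}(k)=0 for k ≥ 3). Then m³ ⊆ I ⊆ m² and I = W + m³, where W = I ∩ R_2 is a ℂ-subspace of R_2 of codimension 2; in particular I is a homogeneous ideal. -/

import Mathlib

open MvPolynomial

noncomputable section

/-- `R n = ℂ[x_1, …, x_n]`. -/
abbrev R (n : ℕ) : Type := MvPolynomial (Fin n) ℂ

/-- `m = (x_1, …, x_n)`, the ideal generated by the variables. -/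
def mId (n : ℕ) : Ideal (R n) := Ideal.span (Set.range MvPolynomial.X)

set_option synthInstance.maxHeartbeats 1000000
set_option maxHeartbeats 2000000

/-- The ideal of polynomials all of whose monomials have degree ≥ k. -/
def degIdeal (n k : ℕ) : Ideal (R n) where
  carrier := {f | ∀ s ∈ f.support, k ≤ s.degree}
  zero_mem' := by simp
  add_mem' := by
    intro a b ha hb s hs
    rcases Finset.mem_union.mp (MvPolynomial.support_add hs) with h | h
    · exact ha s h
    · exact hb s h
  smul_mem' := by
    classical
    intro c x hx s hs
    rw [smul_eq_mul] at hs
    obtain ⟨a, ha, b, hb, rfl⟩ := Finset.mem_add.mp (MvPolynomial.support_mul c x hs)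
    calc k ≤ b.degree := hx b hb
    _ ≤ (a + b).degree := by
        rw [Finsupp.degree_eq_weight_one, map_add]; omega

lemma mem_degIdeal {n k : ℕ} {f : R n} :
    f ∈ degIdeal n k ↔ ∀ s ∈ f.support, k ≤ s.degree := Iff.rfl

lemma mem_mId_iff {n : ℕ} {f : R n} : f ∈ mId n ↔ ∀ s ∈ f.support, 1 ≤ s.degree := by
  rw [mId, ← Set.image_univ, mem_ideal_span_X_image]
  refine forall₂_congr fun s hs => ?_
  simp only [Set.mem_univ, true_and]
  constructor
  · rintro ⟨i, hi⟩
    exact le_trans (Nat.one_le_iff_ne_zero.mpr hi) (Finsupp.le_degree i s)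
  · intro h
    by_contra hc
    push_neg at hc
    have hs0 : s = 0 := by ext i; exact hc i
    rw [hs0] at h
    simp at h

lemma monomial_mem_mpow {n : ℕ} : ∀ (k : ℕ) (s : Fin n →₀ ℕ), k ≤ s.degree → ∀ c : ℂ,
    (monomial s c : R n) ∈ mId n ^ k := by
  intro k
  induction k with
  | zero => intro s _ c; simp
  | succ k ih =>
    intro s hs c
    have hs0 : s ≠ 0 := by
      intro h; rw [h] at hs; simp at hs
    obtain ⟨i, hi⟩ : ∃ i, s i ≠ 0 := by
      by_contra hc; push_neg at hc; exact hs0 (Finsupp.ext hc)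
    set t : Fin n →₀ ℕ := s - Finsupp.single i 1 with ht
    have hst : Finsupp.single i 1 + t = s := by
      ext j
      simp only [Finsupp.add_apply, Finsupp.tsub_apply, ht]
      rcases eq_or_ne j i with rfl | hji
      · simp only [Finsupp.single_eq_same]
        omega
      · simp [Finsupp.single_apply, Ne.symm hji]
    have hdeg : s.degree = 1 + t.degree := by
      rw [← hst, Finsupp.degree_eq_weight_one, map_add]
      congr 1
      rw [← Finsupp.degree_eq_weight_one]
      simp [Finsupp.degree_apply, Finsupp.support_single_ne_zero i (one_ne_zero)]
    have htk : k ≤ t.degree := by omega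
    have : (monomial s c : R n) = X i * monomial t c := by
      rw [X, monomial_mul, one_mul, hst]
    rw [this, pow_succ']
    exact Ideal.mul_mem_mul (Ideal.subset_span ⟨i, rfl⟩) (ih t htk c)

lemma mpow_eq_degIdeal {n : ℕ} (k : ℕ) : mId n ^ k = degIdeal n k := by
  apply le_antisymm
  · induction k with
    | zero => intro f _ s hs; exact Nat.zero_le _
    | succ k ih =>
      rw [pow_succ]
      refine Ideal.mul_le.mpr fun r hr x hx => ?_
      classical
      intro s hs
      obtain ⟨a, ha, b, hb, rfl⟩ := Finset.mem_add.mp (MvPolynomial.support_mul r x hs)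
      have h1 : k ≤ a.degree := ih hr a ha
      have h2 : 1 ≤ b.degree := mem_mId_iff.mp hx b hb
      rw [Finsupp.degree_eq_weight_one, map_add]
      rw [Finsupp.degree_eq_weight_one] at h1 h2
      omega
  · intro f hf
    rw [show f = ∑ s ∈ f.support, monomial s (coeff s f) from (f.as_sum)]
    exact Ideal.sum_mem _ fun s hs => monomial_mem_mpow k s (hf s hs) _

lemma mem_mpow_iff {n k : ℕ} {f : R n} :
    f ∈ mId n ^ k ↔ ∀ s ∈ f.support, k ≤ s.degree := by
  rw [mpow_eq_degIdeal]; rfl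

/-- `R_d`, the ℂ-subspace of homogeneous polynomials of degree `d`. -/
def Rdeg (n d : ℕ) : Submodule ℂ (R n) := homogeneousSubmodule (Fin n) ℂ d

/-- The Hilbert function `h_{R/I}(k) = dim_ℂ (m^k + I)/(m^{k+1} + I)`. -/
def hilbFn (n : ℕ) (I : Ideal (R n)) (k : ℕ) : ℕ :=
  Module.finrank ℂ
    (↥((mId n ^ k ⊔ I).restrictScalars ℂ) ⧸
      (Submodule.comap ((mId n ^ k ⊔ I).restrictScalars ℂ).subtype
        ((mId n ^ (k + 1) ⊔ I).restrictScalars ℂ)))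


lemma support_degree_of_mem_Rdeg {n d : ℕ} {p : R n} (hp : p ∈ Rdeg n d) :
    ∀ s ∈ p.support, s.degree = d := by
  intro s hs
  have := (mem_homogeneousSubmodule d p).mp hp (MvPolynomial.mem_support_iff.mp hs)
  rwa [Pi.one_def, ← Finsupp.degree_eq_weight_one] at this

lemma Rdeg_le_mpow {n d k : ℕ} (hkd : k ≤ d) : Rdeg n d ≤ (mId n ^ k).restrictScalars ℂ := by
  intro p hp
  rw [Submodule.restrictScalars_mem, mem_mpow_iff]
  intro s hs
  rw [support_degree_of_mem_Rdeg hp s hs]; exact hkd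

lemma homogeneousComponent_mem_mpow {n d k : ℕ} (hkd : k ≤ d) (f : R n) :
    homogeneousComponent d f ∈ mId n ^ k :=
  Rdeg_le_mpow hkd (homogeneousComponent_mem d f)

lemma homogeneousComponent_eq_zero_of_mem_mpow {n k d : ℕ} {f : R n}
    (hf : f ∈ mId n ^ k) (hd : d < k) : homogeneousComponent d f = 0 := by
  apply homogeneousComponent_eq_zero'
  intro s hs
  have := mem_mpow_iff.mp hf s hs
  omega

lemma sub_homogeneousComponent_mem_mpow {n k : ℕ} {f : R n} (hf : f ∈ mId n ^ k) :
    f - homogeneousComponent k f ∈ mId n ^ (k + 1) := by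
  rw [mem_mpow_iff]
  intro s hs
  have hcoeff : coeff s (f - homogeneousComponent k f) ≠ 0 := MvPolynomial.mem_support_iff.mp hs
  rw [MvPolynomial.coeff_sub, coeff_homogeneousComponent] at hcoeff
  by_cases hdeg : s.degree = k
  · rw [if_pos hdeg, sub_self] at hcoeff; exact absurd rfl hcoeff
  · rw [if_neg hdeg, sub_zero] at hcoeff
    have := mem_mpow_iff.mp hf s (MvPolynomial.mem_support_iff.mpr hcoeff)
    omega

lemma Rdeg_eq_span (n d : ℕ) : Rdeg n d =
    Submodule.span ℂ ((fun s : Fin n →₀ ℕ => (monomial s (1 : ℂ) : R n)) ''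
      {s | s.degree = d}) := by
  apply le_antisymm
  · intro p hp
    rw [show p = ∑ s ∈ p.support, monomial s (coeff s p) from (p.as_sum)]
    refine Submodule.sum_mem _ fun s hs => ?_
    have : (monomial s (coeff s p) : R n) = coeff s p • monomial s 1 := by
      rw [smul_monomial, smul_eq_mul, mul_one]
    rw [this]
    exact Submodule.smul_mem _ _ (Submodule.subset_span ⟨s, support_degree_of_mem_Rdeg hp s hs, rfl⟩)
  · rw [Submodule.span_le]
    rintro _ ⟨s, hs, rfl⟩
    exact isHomogeneous_monomial 1 hs

instance Rdeg_finite (n d : ℕ) : Module.Finite ℂ (Rdeg n d) := by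
  rw [Rdeg_eq_span]
  apply Module.Finite.span_of_finite
  exact Set.Finite.image _ ((Finsupp.finite_of_degree_le d).subset (fun s hs => le_of_eq hs))

lemma degree_eq_one_iff {n : ℕ} {s : Fin n →₀ ℕ} :
    s.degree = 1 ↔ ∃ i, s = Finsupp.single i 1 := by
  constructor
  · intro hs
    have hs0 : s ≠ 0 := by
      intro h; rw [h] at hs; simp at hs
    obtain ⟨i, hi⟩ : ∃ i, s i ≠ 0 := by
      by_contra hc; push_neg at hc; exact hs0 (Finsupp.ext hc)
    refine ⟨i, ?_⟩
    ext j
    rcases eq_or_ne j i with rfl | hji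
    · have h1 : s j ≤ s.degree := Finsupp.le_degree j s
      simp only [Finsupp.single_eq_same]
      omega
    · rw [Finsupp.single_apply, if_neg (Ne.symm hji)]
      by_contra hj
      have h1 : s i ≤ 1 := hs ▸ Finsupp.le_degree i s
      have h2 : s j ≤ 1 := hs ▸ Finsupp.le_degree j s
      have hij : ({i, j} : Finset (Fin n)) ⊆ s.support := by
        intro x hx
        rcases Finset.mem_insert.mp hx with rfl | hx
        · exact Finsupp.mem_support_iff.mpr hi
        · rw [Finset.mem_singleton.mp hx]
          exact Finsupp.mem_support_iff.mpr hj
      have hsum : s i + s j ≤ s.degree := by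
        rw [Finsupp.degree, ← Finset.sum_pair (Ne.symm hji)]
        exact Finset.sum_le_sum_of_subset hij
      omega
  · rintro ⟨i, rfl⟩
    simp [Finsupp.degree_apply, Finsupp.support_single_ne_zero i one_ne_zero]

lemma Rdeg_one_eq_span (n : ℕ) :
    Rdeg n 1 = Submodule.span ℂ (Set.range (X : Fin n → R n)) := by
  rw [Rdeg_eq_span]
  congr 1
  ext p
  constructor
  · rintro ⟨s, hs, rfl⟩
    obtain ⟨i, rfl⟩ := degree_eq_one_iff.mp hs
    exact ⟨i, rfl⟩
  · rintro ⟨i, rfl⟩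
    exact ⟨Finsupp.single i 1, degree_eq_one_iff.mpr ⟨i, rfl⟩, rfl⟩

lemma linearIndependent_X (n : ℕ) : LinearIndependent ℂ (X : Fin n → R n) := by
  have : (X : Fin n → R n) = (fun s : Fin n →₀ ℕ => (monomial s (1:ℂ) : R n)) ∘
      (fun i => Finsupp.single i 1) := by
    ext i : 1; rfl
  rw [this]
  exact ((basisMonomials (Fin n) ℂ).linearIndependent).comp _
    (fun i j h => by simpa using Finsupp.single_left_injective one_ne_zero h)

lemma finrank_Rdeg_one (n : ℕ) : Module.finrank ℂ (Rdeg n 1) = n := by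
  rw [Rdeg_one_eq_span, finrank_span_eq_card (linearIndependent_X n)]
  simp

section Main
variable (n : ℕ) (I : Ideal (R n))

/-- `J k = m^k ⊔ I` as a ℂ-submodule. -/
def Jmod (k : ℕ) : Submodule ℂ (R n) := (mId n ^ k ⊔ I).restrictScalars ℂ

lemma Rdeg_le_Jmod (k : ℕ) : Rdeg n k ≤ Jmod n I k :=
  le_trans (Rdeg_le_mpow le_rfl) (by
    intro x hx
    exact Ideal.mem_sup_left hx)

/-- The projection `R_k → J_k / J_{k+1}`. -/
def psi (k : ℕ) : Rdeg n k →ₗ[ℂ]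
    (Jmod n I k ⧸ Submodule.comap (Jmod n I k).subtype (Jmod n I (k + 1))) :=
  (Submodule.comap (Jmod n I k).subtype (Jmod n I (k + 1))).mkQ ∘ₗ
    Submodule.inclusion (Rdeg_le_Jmod n I k)

lemma psi_surjective (k : ℕ) : Function.Surjective (psi n I k) := by
  intro y
  obtain ⟨⟨g, hg⟩, rfl⟩ := Submodule.mkQ_surjective _ y
  obtain ⟨a, ha, b, hb, hab⟩ := Submodule.mem_sup.mp hg
  refine ⟨⟨homogeneousComponent k a, homogeneousComponent_mem k a⟩, ?_⟩
  rw [psi, LinearMap.comp_apply, Submodule.mkQ_apply, Submodule.mkQ_apply,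
    Submodule.Quotient.eq, Submodule.mem_comap]
  show (homogeneousComponent k a - g : R n) ∈ Jmod n I (k + 1)
  have h1 : homogeneousComponent k a - a ∈ mId n ^ (k + 1) := by
    have := sub_homogeneousComponent_mem_mpow ha
    simpa using (mId n ^ (k+1)).neg_mem this
  have : (homogeneousComponent k a - g : R n) = (homogeneousComponent k a - a) + (-b) := by
    rw [← hab]; ring
  rw [this]
  exact Submodule.add_mem _ (Ideal.mem_sup_left h1) (Ideal.mem_sup_right (I.neg_mem hb))

instance (k : ℕ) : Module.Finite ℂ
    (Jmod n I k ⧸ Submodule.comap (Jmod n I k).subtype (Jmod n I (k + 1))) :=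
  Module.Finite.of_surjective (psi n I k) (psi_surjective n I k)

lemma Jmod_succ_le (k : ℕ) : Jmod n I (k + 1) ≤ Jmod n I k := fun x hx => by
  have hle : mId n ^ (k+1) ⊔ I ≤ mId n ^ k ⊔ I :=
    sup_le_sup_right (Ideal.pow_le_pow_right (Nat.le_succ k)) I
  exact hle hx

lemma Jmod_eq_of_finrank_zero {k : ℕ}
    (h : Module.finrank ℂ
      (Jmod n I k ⧸ Submodule.comap (Jmod n I k).subtype (Jmod n I (k + 1))) = 0) :
    Jmod n I k = Jmod n I (k + 1) := by
  have hsub : Subsingleton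
      (Jmod n I k ⧸ Submodule.comap (Jmod n I k).subtype (Jmod n I (k + 1))) :=
    Module.finrank_zero_iff.mp h
  have htop := Submodule.Quotient.subsingleton_iff.mp hsub
  refine le_antisymm ?_ (Jmod_succ_le n I k)
  intro x hx
  have : (⟨x, hx⟩ : Jmod n I k) ∈ Submodule.comap (Jmod n I k).subtype (Jmod n I (k + 1)) := by
    rw [htop]; trivial
  exact this

end Main

lemma hilbFn_eq (n : ℕ) (I : Ideal (R n)) (k : ℕ) :
    hilbFn n I k = Module.finrank ℂ
      (Jmod n I k ⧸ Submodule.comap (Jmod n I k).subtype (Jmod n I (k + 1))) := rfl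

/-- Let `n ≥ 2` and let `I ⊆ R` be an `m`-primary ideal with Hilbert
function `h_{R/I} = (1, n, 2)`. Then `m³ ⊆ I ⊆ m²` and `I = W + m³` where `W = I ∩ R_2`
is a ℂ-subspace of `R_2` of codimension 2; in particular `I` is homogeneous. -/
theorem hilbert_function_one_n_two_structure (n : ℕ) (hn : 2 ≤ n) (I : Ideal (R n))
    (hprimary : ∃ N : ℕ, 1 ≤ N ∧ mId n ^ N ≤ I)
    (h0 : hilbFn n I 0 = 1) (h1 : hilbFn n I 1 = n) (h2 : hilbFn n I 2 = 2)
    (h3 : ∀ k : ℕ, 3 ≤ k → hilbFn n I k = 0) :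
    mId n ^ 3 ≤ I ∧
    I ≤ mId n ^ 2 ∧
    I = Ideal.span ((I.restrictScalars ℂ ⊓ Rdeg n 2 : Submodule ℂ (R n)) : Set (R n))
        ⊔ mId n ^ 3 ∧
    Module.finrank ℂ ↥(I.restrictScalars ℂ ⊓ Rdeg n 2) + 2 = Module.finrank ℂ ↥(Rdeg n 2) ∧
    (∀ f ∈ I, ∀ d : ℕ, homogeneousComponent d f ∈ I) := by
  -- Step 1: I ≤ m
  have hIm : I ≤ mId n := by
    by_contra hIm
    obtain ⟨f, hfI, hfm⟩ := SetLike.not_le_iff_exists.mp hIm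
    -- constant coefficient nonzero
    have hc : coeff 0 f ≠ 0 := by
      rw [mem_mId_iff] at hfm
      push_neg at hfm
      obtain ⟨s, hs, hdeg⟩ := hfm
      have : s = 0 := (Finsupp.degree_eq_zero_iff s).mp (by omega)
      rw [← this]
      exact MvPolynomial.mem_support_iff.mp hs
    have hfC : f - C (coeff 0 f) ∈ mId n := by
      rw [mem_mId_iff]
      intro s hs
      have hco : coeff s (f - C (coeff 0 f)) ≠ 0 := MvPolynomial.mem_support_iff.mp hs
      by_contra hd
      have hs0 : s = 0 := (Finsupp.degree_eq_zero_iff s).mp (by omega)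
      rw [hs0] at hco
      simp [MvPolynomial.coeff_sub] at hco
    have htop : mId n ⊔ I = ⊤ := by
      rw [Ideal.eq_top_iff_one]
      have hCc : C (coeff 0 f) ∈ mId n ⊔ I := by
        have : C (coeff 0 f) = f - (f - C (coeff 0 f)) := by ring
        rw [this]
        exact Submodule.sub_mem _ (Ideal.mem_sup_right hfI) (Ideal.mem_sup_left hfC)
      have := Ideal.mul_mem_left _ (C (coeff 0 f)⁻¹) hCc
      rwa [← C_mul, inv_mul_cancel₀ hc, C_1] at this
    have hJ1 : Jmod n I 1 = ⊤ := by
      rw [Jmod, pow_one, htop]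
      rfl
    have : Subsingleton
        (Jmod n I 0 ⧸ Submodule.comap (Jmod n I 0).subtype (Jmod n I 1)) := by
      rw [Submodule.Quotient.subsingleton_iff, hJ1, Submodule.comap_top]
    rw [hilbFn_eq, Module.finrank_zero_of_subsingleton] at h0
    exact absurd h0.symm one_ne_zero
  -- Step 2: m³ ≤ I
  obtain ⟨N, hN1, hNI⟩ := hprimary
  have hJeq : ∀ k, 3 ≤ k → Jmod n I k = Jmod n I (k + 1) := fun k hk =>
    Jmod_eq_of_finrank_zero n I (h3 k hk)
  have hchain : ∀ j : ℕ, Jmod n I 3 = Jmod n I (3 + j) := by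
    intro j
    induction j with
    | zero => rfl
    | succ j ih => rw [ih, show 3 + (j+1) = (3+j) + 1 from rfl]; exact hJeq _ (by omega)
  have hm3 : mId n ^ 3 ≤ I := by
    set M := max 3 N with hM
    have hJM : Jmod n I 3 = Jmod n I M := by
      have := hchain (M - 3)
      rwa [show 3 + (M - 3) = M by omega] at this
    have hJMI : Jmod n I M = I.restrictScalars ℂ := by
      rw [Jmod]
      congr 1
      rw [sup_eq_right]
      exact le_trans (Ideal.pow_le_pow_right (by omega)) hNI
    intro x hx
    have : x ∈ Jmod n I 3 := Ideal.mem_sup_left hx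
    rw [hJM, hJMI] at this
    exact this
  -- kernel of psi
  have ker_psi_eq : ∀ k : ℕ, LinearMap.ker (psi n I k) =
      Submodule.comap (Rdeg n k).subtype (Jmod n I (k + 1)) := by
    intro k
    ext x
    simp only [psi, LinearMap.mem_ker, LinearMap.comp_apply, Submodule.mkQ_apply,
      Submodule.Quotient.mk_eq_zero, Submodule.mem_comap]
    rfl
  -- Step 3: I ≤ m²
  have hker1 : LinearMap.ker (psi n I 1) = ⊥ := by
    have hrn := LinearMap.finrank_range_add_finrank_ker (psi n I 1)
    rw [LinearMap.range_eq_top.mpr (psi_surjective n I 1), finrank_top, ← hilbFn_eq, h1,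
      finrank_Rdeg_one] at hrn
    exact Submodule.finrank_eq_zero.mp (by omega)
  have hI2 : I ≤ mId n ^ 2 := by
    intro f hf
    have hfm : f ∈ mId n := hIm hf
    have hsub : f - homogeneousComponent 1 f ∈ mId n ^ 2 :=
      sub_homogeneousComponent_mem_mpow (by rwa [pow_one])
    have hmem : homogeneousComponent 1 f ∈ Jmod n I 2 := by
      have ha : f ∈ Jmod n I 2 := Ideal.mem_sup_right hf
      have hb : f - homogeneousComponent 1 f ∈ Jmod n I 2 := Ideal.mem_sup_left hsub
      have := Submodule.sub_mem _ ha hb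
      simpa using this
    have hx : (⟨homogeneousComponent 1 f, homogeneousComponent_mem 1 f⟩ : Rdeg n 1) ∈
        LinearMap.ker (psi n I 1) := by
      rw [ker_psi_eq]; exact hmem
    rw [hker1, Submodule.mem_bot] at hx
    have hzero : homogeneousComponent 1 f = 0 := congrArg Subtype.val hx
    rwa [hzero, sub_zero] at hsub
  -- Step 4: codimension of W
  have hJ3 : Jmod n I 3 = I.restrictScalars ℂ := by
    rw [Jmod]; congr 1; exact sup_eq_right.mpr hm3
  have hker2 : LinearMap.ker (psi n I 2) =
      Submodule.comap (Rdeg n 2).subtype (I.restrictScalars ℂ ⊓ Rdeg n 2) := by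
    rw [ker_psi_eq]
    ext x
    simp only [Submodule.mem_comap, show (2:ℕ)+1 = 3 from rfl, hJ3, Submodule.mem_inf]
    exact ⟨fun h => ⟨h, x.2⟩, fun h => h.1⟩
  have hWrank : Module.finrank ℂ ↥(I.restrictScalars ℂ ⊓ Rdeg n 2) + 2 =
      Module.finrank ℂ ↥(Rdeg n 2) := by
    have hrn := LinearMap.finrank_range_add_finrank_ker (psi n I 2)
    rw [LinearMap.range_eq_top.mpr (psi_surjective n I 2), finrank_top, ← hilbFn_eq, h2,
      hker2] at hrn
    have hEq : Module.finrank ℂ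
        ↥(Submodule.comap (Rdeg n 2).subtype (I.restrictScalars ℂ ⊓ Rdeg n 2)) =
        Module.finrank ℂ ↥(I.restrictScalars ℂ ⊓ Rdeg n 2) :=
      (Submodule.comapSubtypeEquivOfLe
        (inf_le_right : I.restrictScalars ℂ ⊓ Rdeg n 2 ≤ Rdeg n 2)).finrank_eq
    omega
  -- component of degree 2 lies in I
  have hc2I : ∀ f ∈ I, homogeneousComponent 2 f ∈ I := by
    intro f hf
    have hsub3 : f - homogeneousComponent 2 f ∈ mId n ^ 3 :=
      sub_homogeneousComponent_mem_mpow (hI2 hf)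
    have := I.sub_mem hf (hm3 hsub3)
    simpa using this
  -- Statement 3
  have hspan : I = Ideal.span ((I.restrictScalars ℂ ⊓ Rdeg n 2 : Submodule ℂ (R n)) : Set (R n))
      ⊔ mId n ^ 3 := by
    apply le_antisymm
    · intro f hf
      have hsub3 : f - homogeneousComponent 2 f ∈ mId n ^ 3 :=
        sub_homogeneousComponent_mem_mpow (hI2 hf)
      have hW : homogeneousComponent 2 f ∈
          Ideal.span ((I.restrictScalars ℂ ⊓ Rdeg n 2 : Submodule ℂ (R n)) : Set (R n)) :=
        Ideal.subset_span (Submodule.mem_inf.mpr ⟨hc2I f hf, homogeneousComponent_mem 2 f⟩)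
      have : f = homogeneousComponent 2 f + (f - homogeneousComponent 2 f) := by ring
      rw [this]
      exact Submodule.add_mem _ (Ideal.mem_sup_left hW) (Ideal.mem_sup_right hsub3)
    · refine sup_le (Ideal.span_le.mpr ?_) hm3
      rintro x hx
      exact (Submodule.mem_inf.mp hx).1
  -- Statement 5: homogeneity
  refine ⟨hm3, hI2, hspan, hWrank, ?_⟩
  intro f hf d
  match d with
  | 0 =>
    rw [homogeneousComponent_eq_zero_of_mem_mpow (hI2 hf) (by omega)]
    exact I.zero_mem
  | 1 =>
    rw [homogeneousComponent_eq_zero_of_mem_mpow (hI2 hf) (by omega)]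
    exact I.zero_mem
  | 2 => exact hc2I f hf
  | (d + 3) =>
    exact hm3 (homogeneousComponent_mem_mpow (by omega) f)


end
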